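/- Let 1 < q ≤ p < ∞. The space M̃^p_q(ℝⁿ) (closure of simple functions of finite-measure support in the Morrey norm) coincides with M̂^p_q(ℝⁿ), the set of functions in M^p_q(ℝⁿ) of absolutely continuous norm. -/

import Mathlib

open MeasureTheory ENNReal Set Filter

/-- The open axis-parallel cube with corner `a` and side length `s`. -/
noncomputable def cube (n : ℕ) (a : Fin n → ℝ) (s : ℝ) : Set (Fin n → ℝ) :=
  Set.univ.pi fun i => Set.Ioo (a i) (a i + s)

/-- The Morrey norm `‖f‖_{M^p_q}` on `ℝⁿ`. -/
noncomputable def morreyNorm (n : ℕ) (p q : ℝ) (f : (Fin n → ℝ) → ℝ) : ℝ≥0∞ :=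
  ⨆ (a : Fin n → ℝ) (s : ℝ) (_ : 0 < s),
    ENNReal.ofReal ((s ^ n) ^ (1 / p - 1 / q)) *
      (∫⁻ x in cube n a s, ENNReal.ofReal (|f x| ^ q)) ^ (1 / q)

/-- The Hölder conjugate exponent `p' = p/(p-1)`. -/
noncomputable def conjExp (p : ℝ) : ℝ := p / (p - 1)

/-- A `(p',q')`-block: a measurable function supported on a cube `Q` with
`‖b‖_{L^{q'}} ≤ |Q|^{1/p-1/q}`. -/
def IsBlock (n : ℕ) (p q : ℝ) (b : (Fin n → ℝ) → ℝ) : Prop :=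
  Measurable b ∧ ∃ (a : Fin n → ℝ) (s : ℝ), 0 < s ∧
    Function.support b ⊆ cube n a s ∧
    (∫⁻ x, ENNReal.ofReal (|b x| ^ conjExp q)) ^ (1 / conjExp q) ≤
      ENNReal.ofReal ((s ^ n) ^ (1 / p - 1 / q))

/-- `f = ∑ₖ λₖ bₖ` a.e. with absolutely convergent coefficients and `(p',q')`-blocks. -/
def IsBlockRep (n : ℕ) (p q : ℝ) (f : (Fin n → ℝ) → ℝ) (l : ℕ → ℝ)
    (b : ℕ → (Fin n → ℝ) → ℝ) : Prop :=
  (∀ k, IsBlock n p q (b k)) ∧ Summable (fun k => |l k|) ∧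
    ∀ᵐ x : Fin n → ℝ, Summable (fun k => l k * b k x) ∧ f x = ∑' k, l k * b k x

/-- Membership in the block space `B^{p'}_{q'}(ℝⁿ)`. -/
def MemBlockSpace (n : ℕ) (p q : ℝ) (f : (Fin n → ℝ) → ℝ) : Prop :=
  ∃ l b, IsBlockRep n p q f l b

/-- The block space norm `‖f‖_{B^{p'}_{q'}}`: infimal `ℓ¹`-sum of coefficients. -/
noncomputable def blockNorm (n : ℕ) (p q : ℝ) (f : (Fin n → ℝ) → ℝ) : ℝ≥0∞ :=
  ⨅ (l : ℕ → ℝ) (b : ℕ → (Fin n → ℝ) → ℝ) (_ : IsBlockRep n p q f l b),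
    ENNReal.ofReal (∑' k, |l k|)

/-- A finite linear combination of characteristic functions of measurable sets of
finite measure. -/
def IsFinSimple (n : ℕ) (g : (Fin n → ℝ) → ℝ) : Prop :=
  ∃ (N : ℕ) (c : Fin N → ℝ) (A : Fin N → Set (Fin n → ℝ)),
    (∀ i, MeasurableSet (A i) ∧ volume (A i) < ⊤) ∧
    g = fun x => ∑ i, c i * (A i).indicator (fun _ => (1 : ℝ)) x

/-- Membership in M̃^p_q: the closure in M^p_q of the finite simple functions. -/
def MemMorreyTilde (n : ℕ) (p q : ℝ) (f : (Fin n → ℝ) → ℝ) : Prop :=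
  Measurable f ∧ morreyNorm n p q f < ⊤ ∧
    ∀ ε : ℝ, 0 < ε → ∃ g, IsFinSimple n g ∧
      morreyNorm n p q (fun x => f x - g x) ≤ ENNReal.ofReal ε

/-- Membership in M̂^p_q: functions of M^p_q with absolutely continuous norm. -/
def MemMorreyHat (n : ℕ) (p q : ℝ) (f : (Fin n → ℝ) → ℝ) : Prop :=
  Measurable f ∧ morreyNorm n p q f < ⊤ ∧
    ∀ E : ℕ → Set (Fin n → ℝ), (∀ k, MeasurableSet (E k)) →
      (∀ᵐ x : Fin n → ℝ,
        Tendsto (fun k => (E k).indicator (fun _ => (1 : ℝ)) x) atTop (nhds 0)) →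
      Tendsto (fun k => morreyNorm n p q ((E k).indicator f)) atTop (nhds 0)

section helpers
variable {n : ℕ} {p q : ℝ}

lemma cube_measurableSet (n : ℕ) (a : Fin n → ℝ) (s : ℝ) : MeasurableSet (cube n a s) :=
  MeasurableSet.univ_pi fun _ => measurableSet_Ioo

lemma volume_cube (n : ℕ) (a : Fin n → ℝ) {s : ℝ} (hs : 0 ≤ s) :
    volume (cube n a s) = ENNReal.ofReal (s ^ n) := by
  rw [cube, volume_pi, Measure.pi_pi]
  simp only [Real.volume_Ioo, add_sub_cancel_left]
  rw [Finset.prod_const, ENNReal.ofReal_pow hs, Finset.card_univ, Fintype.card_fin]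

lemma le_morreyNorm (f : (Fin n → ℝ) → ℝ) (a : Fin n → ℝ) {s : ℝ} (hs : 0 < s) :
    ENNReal.ofReal ((s ^ n) ^ (1 / p - 1 / q)) *
      (∫⁻ x in cube n a s, ENNReal.ofReal (|f x| ^ q)) ^ (1 / q) ≤ morreyNorm n p q f :=
  le_iSup_of_le a (le_iSup_of_le s (le_iSup_of_le hs le_rfl))

lemma morreyNorm_le {f : (Fin n → ℝ) → ℝ} {C : ℝ≥0∞}
    (h : ∀ (a : Fin n → ℝ) (s : ℝ), 0 < s →
      ENNReal.ofReal ((s ^ n) ^ (1 / p - 1 / q)) *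
        (∫⁻ x in cube n a s, ENNReal.ofReal (|f x| ^ q)) ^ (1 / q) ≤ C) :
    morreyNorm n p q f ≤ C :=
  iSup_le fun a => iSup_le fun s => iSup_le fun hs => h a s hs

lemma morreyNorm_mono (hq0 : 0 < q) {u v : (Fin n → ℝ) → ℝ} (h : ∀ x, |u x| ≤ |v x|) :
    morreyNorm n p q u ≤ morreyNorm n p q v := by
  refine morreyNorm_le fun a s hs => le_trans ?_ (le_morreyNorm v a hs)
  refine mul_le_mul_right (ENNReal.rpow_le_rpow (lintegral_mono fun x => ?_) (by positivity)) _
  exact ENNReal.ofReal_le_ofReal (Real.rpow_le_rpow (abs_nonneg _) (h x) hq0.le)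

lemma morreyNorm_smul_le (hq0 : 0 < q) (c : ℝ) (u : (Fin n → ℝ) → ℝ) :
    morreyNorm n p q (fun x => c * u x) ≤ ENNReal.ofReal |c| * morreyNorm n p q u := by
  refine morreyNorm_le fun a s hs => ?_
  have h1 : ∀ x : Fin n → ℝ, ENNReal.ofReal (|c * u x| ^ q)
      = ENNReal.ofReal (|c| ^ q) * ENNReal.ofReal (|u x| ^ q) := fun x => by
    rw [abs_mul, Real.mul_rpow (abs_nonneg _) (abs_nonneg _),
      ENNReal.ofReal_mul (by positivity)]
  simp only [h1]
  rw [lintegral_const_mul' _ _ ENNReal.ofReal_ne_top,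
      ENNReal.mul_rpow_of_nonneg _ _ (by positivity : (0:ℝ) ≤ 1/q)]
  have h2 : ENNReal.ofReal (|c| ^ q) ^ (1/q) = ENNReal.ofReal |c| := by
    rw [← ENNReal.ofReal_rpow_of_nonneg (abs_nonneg _) hq0.le, ← ENNReal.rpow_mul,
      mul_one_div_cancel hq0.ne', ENNReal.rpow_one]
  rw [h2, mul_left_comm]
  exact mul_le_mul_right (le_morreyNorm u a hs) _

lemma morreyNorm_zero (hq0 : 0 < q) : morreyNorm n p q (fun _ => (0:ℝ)) = 0 := by
  refine le_antisymm (morreyNorm_le fun a s hs => ?_) zero_le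
  simp only [abs_zero, Real.zero_rpow hq0.ne', ENNReal.ofReal_zero, lintegral_zero,
    ENNReal.zero_rpow_of_pos (by positivity : (0:ℝ) < 1/q), mul_zero, le_refl]

end helpers
section helpers2
variable {n : ℕ} {p q : ℝ}

lemma morreyNorm_add_le (hq : 1 ≤ q) {u v : (Fin n → ℝ) → ℝ}
    (hu : Measurable u) (hv : Measurable v) :
    morreyNorm n p q (fun x => u x + v x) ≤ morreyNorm n p q u + morreyNorm n p q v := by
  have hq0 : 0 < q := lt_of_lt_of_le one_pos hq
  refine morreyNorm_le fun a s hs => ?_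
  set μ := volume.restrict (cube n a s) with hμ
  have key : (∫⁻ x, ENNReal.ofReal (|u x + v x| ^ q) ∂μ) ^ (1/q)
      ≤ (∫⁻ x, ENNReal.ofReal (|u x| ^ q) ∂μ) ^ (1/q)
        + (∫⁻ x, ENNReal.ofReal (|v x| ^ q) ∂μ) ^ (1/q) := by
    have step : ∀ x, ENNReal.ofReal (|u x + v x| ^ q) ≤
        ((fun x => ENNReal.ofReal |u x|) + fun x => ENNReal.ofReal |v x|) x ^ q := by
      intro x
      rw [Pi.add_apply, ← ENNReal.ofReal_add (abs_nonneg _) (abs_nonneg _),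
        ENNReal.ofReal_rpow_of_nonneg (by positivity) hq0.le]
      exact ENNReal.ofReal_le_ofReal (Real.rpow_le_rpow (abs_nonneg _) (abs_add_le _ _) hq0.le)
    calc (∫⁻ x, ENNReal.ofReal (|u x + v x| ^ q) ∂μ) ^ (1/q)
        ≤ (∫⁻ x, ((fun x => ENNReal.ofReal |u x|) + fun x => ENNReal.ofReal |v x|) x ^ q ∂μ) ^ (1/q) :=
          ENNReal.rpow_le_rpow (lintegral_mono step) (by positivity)
      _ ≤ (∫⁻ x, ENNReal.ofReal |u x| ^ q ∂μ) ^ (1/q)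
            + (∫⁻ x, ENNReal.ofReal |v x| ^ q ∂μ) ^ (1/q) :=
          ENNReal.lintegral_Lp_add_le hu.abs.ennreal_ofReal.aemeasurable
            hv.abs.ennreal_ofReal.aemeasurable hq
      _ = _ := by
          simp only [ENNReal.ofReal_rpow_of_nonneg (abs_nonneg _) hq0.le]
  calc ENNReal.ofReal ((s ^ n) ^ (1/p - 1/q)) *
        (∫⁻ x in cube n a s, ENNReal.ofReal (|u x + v x| ^ q)) ^ (1/q)
      ≤ ENNReal.ofReal ((s ^ n) ^ (1/p - 1/q)) *
        ((∫⁻ x, ENNReal.ofReal (|u x| ^ q) ∂μ) ^ (1/q)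
          + (∫⁻ x, ENNReal.ofReal (|v x| ^ q) ∂μ) ^ (1/q)) := mul_le_mul_right key _
    _ = ENNReal.ofReal ((s ^ n) ^ (1/p - 1/q)) * (∫⁻ x, ENNReal.ofReal (|u x| ^ q) ∂μ) ^ (1/q)
          + ENNReal.ofReal ((s ^ n) ^ (1/p - 1/q)) * (∫⁻ x, ENNReal.ofReal (|v x| ^ q) ∂μ) ^ (1/q) :=
        mul_add _ _ _
    _ ≤ morreyNorm n p q u + morreyNorm n p q v :=
        add_le_add (le_morreyNorm u a hs) (le_morreyNorm v a hs)

lemma morreyNorm_sum_le (hq : 1 ≤ q) {ι : Type*} (t : Finset ι)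
    (u : ι → (Fin n → ℝ) → ℝ) (hu : ∀ i, Measurable (u i)) :
    morreyNorm n p q (fun x => ∑ i ∈ t, u i x) ≤ ∑ i ∈ t, morreyNorm n p q (u i) := by
  induction t using Finset.cons_induction with
  | empty => simp [morreyNorm_zero (lt_of_lt_of_le one_pos hq)]
  | cons i t hi ih =>
    simp only [Finset.sum_cons]
    exact (morreyNorm_add_le hq (hu i)
      (Finset.measurable_sum t fun j _ => hu j)).trans (add_le_add_right ih _)

lemma ennreal_rpow_anti {x y : ℝ≥0∞} {z : ℝ} (hx : x ≠ 0) (hy : y ≠ ⊤) (hxy : x ≤ y)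
    (hz : z ≤ 0) : y ^ z ≤ x ^ z := by
  have hx' : x ≠ ⊤ := ne_top_of_le_ne_top hy hxy
  have hy0 : y ≠ 0 := fun h => hx (le_antisymm (le_trans hxy h.le) zero_le)
  lift x to NNReal using hx'
  lift y to NNReal using hy
  rw [← ENNReal.coe_rpow_of_ne_zero (by exact_mod_cast hy0),
    ← ENNReal.coe_rpow_of_ne_zero (by exact_mod_cast hx), ENNReal.coe_le_coe]
  exact NNReal.rpow_le_rpow_of_nonpos (zero_lt_iff.mpr (by exact_mod_cast hx))
    (by exact_mod_cast hxy) hz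

lemma rpow_block_bound (hq : 1 < q) (hqp : q ≤ p) {T m V : ℝ≥0∞}
    (hT0 : T ≠ 0) (hTt : T ≠ ⊤) (hmT : m ≤ T) (hmV : m ≤ V) :
    T ^ (1/p - 1/q) * m ^ (1/q) ≤ V ^ (1/p) := by
  have hq0 : 0 < q := by linarith
  have hp0 : 0 < p := by linarith
  by_cases hV : V = ⊤
  · rw [hV, ENNReal.top_rpow_of_pos (by positivity : (0:ℝ) < 1/p)]
    exact le_top
  rcases le_total T V with h | h
  · calc T ^ (1/p - 1/q) * m ^ (1/q) ≤ T ^ (1/p - 1/q) * T ^ (1/q) :=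
        mul_le_mul_right (ENNReal.rpow_le_rpow hmT (by positivity)) _
      _ = T ^ (1/p) := by rw [← ENNReal.rpow_add _ _ hT0 hTt, sub_add_cancel]
      _ ≤ V ^ (1/p) := ENNReal.rpow_le_rpow h (by positivity)
  · by_cases hV0 : V = 0
    · have hm0 : m = 0 := le_antisymm (hV0 ▸ hmV) zero_le
      rw [hm0, hV0, ENNReal.zero_rpow_of_pos (by positivity : (0:ℝ) < 1/q),
        ENNReal.zero_rpow_of_pos (by positivity : (0:ℝ) < 1/p), mul_zero]
    · have he : 1/p - 1/q ≤ 0 := by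
        have h1 : 1/p ≤ 1/q := one_div_le_one_div_of_le hq0 hqp
        linarith
      calc T ^ (1/p - 1/q) * m ^ (1/q) ≤ V ^ (1/p - 1/q) * V ^ (1/q) :=
          mul_le_mul' (ennreal_rpow_anti hV0 hTt h he)
            (ENNReal.rpow_le_rpow hmV (by positivity))
        _ = V ^ (1/p) := by rw [← ENNReal.rpow_add _ _ hV0 hV, sub_add_cancel]

lemma morreyNorm_indicator_le (hq : 1 < q) (hqp : q ≤ p) {B : Set (Fin n → ℝ)}
    (hB : MeasurableSet B) :
    morreyNorm n p q (B.indicator fun _ => (1:ℝ)) ≤ volume B ^ (1/p) := by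
  have hq0 : 0 < q := by linarith
  refine morreyNorm_le fun a s hs => ?_
  have hint : ∀ x : Fin n → ℝ, ENNReal.ofReal (|B.indicator (fun _ => (1:ℝ)) x| ^ q)
      = B.indicator (fun _ => (1:ℝ≥0∞)) x := by
    intro x
    by_cases hx : x ∈ B <;> simp [hx, Real.zero_rpow hq0.ne']
  simp only [hint]
  rw [lintegral_indicator hB, setLIntegral_one, Measure.restrict_apply hB]
  have hpre : ENNReal.ofReal ((s ^ n) ^ (1/p - 1/q)) = ENNReal.ofReal (s ^ n) ^ (1/p - 1/q) :=
    (ENNReal.ofReal_rpow_of_pos (by positivity)).symm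
  rw [hpre]
  refine rpow_block_bound hq hqp ?_ ENNReal.ofReal_ne_top ?_
    (measure_mono Set.inter_subset_left)
  · simp [ENNReal.ofReal_eq_zero, not_le]; positivity
  · rw [← volume_cube n a hs.le]
    exact measure_mono Set.inter_subset_right

end helpers2
section helpers3
variable {n : ℕ}

lemma tendsto_volume_inter (E : ℕ → Set (Fin n → ℝ)) (hE : ∀ k, MeasurableSet (E k))
    (hae : ∀ᵐ x : Fin n → ℝ,
      Tendsto (fun k => (E k).indicator (fun _ => (1:ℝ)) x) atTop (nhds 0))
    {A : Set (Fin n → ℝ)} (hA : MeasurableSet A) (hAv : volume A < ⊤) :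
    Tendsto (fun k => volume (E k ∩ A)) atTop (nhds 0) := by
  have hvol : ∀ k, volume (E k ∩ A)
      = ∫⁻ x, (E k ∩ A).indicator (fun _ => (1:ℝ≥0∞)) x := by
    intro k
    rw [lintegral_indicator ((hE k).inter hA), setLIntegral_one]
  simp only [hvol]
  have h0 : (0:ℝ≥0∞) = ∫⁻ _ : Fin n → ℝ, (0:ℝ≥0∞) := lintegral_zero.symm
  rw [h0]
  refine tendsto_lintegral_of_dominated_convergence (A.indicator fun _ => (1:ℝ≥0∞))
    (fun k => measurable_const.indicator ((hE k).inter hA))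
    (fun k => ae_of_all _ fun x =>
      Set.indicator_le_indicator_of_subset Set.inter_subset_right (fun _ => zero_le) x)
    ?_ ?_
  · rw [lintegral_indicator hA, setLIntegral_one]
    exact hAv.ne
  · filter_upwards [hae] with x hx
    have hev : ∀ᶠ k in atTop, x ∉ E k := by
      filter_upwards [hx.eventually_lt_const (by norm_num : (0:ℝ) < 1)] with k hk
      intro hxk
      rw [Set.indicator_of_mem hxk] at hk
      exact absurd hk (lt_irrefl _)
    refine Tendsto.congr' ?_ tendsto_const_nhds
    filter_upwards [hev] with k hk
    have : x ∉ E k ∩ A := fun h => hk h.1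
    rw [Set.indicator_of_notMem this]

end helpers3
lemma tilde_to_hat {n : ℕ} {p q : ℝ} (hq : 1 < q) (hqp : q ≤ p)
    {f : (Fin n → ℝ) → ℝ} (hf : MemMorreyTilde n p q f) : MemMorreyHat n p q f := by
  obtain ⟨hmeas, hfin, happrox⟩ := hf
  have hq0 : 0 < q := by linarith
  have hp0 : 0 < p := by linarith
  refine ⟨hmeas, hfin, fun E hE hae => ?_⟩
  rw [ENNReal.tendsto_nhds_zero]
  intro ε hε
  obtain ⟨r, hr0, hrε⟩ : ∃ r : ℝ, 0 < r ∧ ENNReal.ofReal r ≤ ε := by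
    rcases eq_top_or_lt_top ε with h | h
    · exact ⟨1, one_pos, h ▸ le_top⟩
    · exact ⟨ε.toReal, ENNReal.toReal_pos hε.ne' h.ne,
        le_of_eq (ENNReal.ofReal_toReal h.ne)⟩
  obtain ⟨g, hg, hfg⟩ := happrox (r/2) (by linarith)
  obtain ⟨N, c, A, hA, hgdef⟩ := hg
  have hgmeas : Measurable g := by
    rw [hgdef]
    exact Finset.measurable_sum _ fun i _ =>
      (measurable_const.indicator (hA i).1).const_mul (c i)
  have hdecomp : ∀ k, morreyNorm n p q ((E k).indicator f) ≤
      morreyNorm n p q (fun x => f x - g x) + morreyNorm n p q ((E k).indicator g) := by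
    intro k
    have heq : (E k).indicator f
        = fun x => (E k).indicator (fun y => f y - g y) x + (E k).indicator g x := by
      funext x
      by_cases hx : x ∈ E k <;> simp [hx]
    rw [heq]
    refine (morreyNorm_add_le hq.le ((hmeas.sub hgmeas).indicator (hE k))
      (hgmeas.indicator (hE k))).trans (add_le_add ?_ le_rfl)
    refine morreyNorm_mono hq0 fun x => ?_
    by_cases hx : x ∈ E k
    · rw [Set.indicator_of_mem hx]; rfl
    · rw [Set.indicator_of_notMem hx, abs_zero]
      exact abs_nonneg _
  have hgk : ∀ k, (E k).indicator g
      = fun x => ∑ i, c i * ((E k ∩ A i).indicator (fun _ => (1:ℝ)) x) := by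
    intro k
    funext x
    by_cases hx : x ∈ E k
    · rw [Set.indicator_of_mem hx, hgdef]
      refine Finset.sum_congr rfl fun i _ => ?_
      by_cases hxi : x ∈ A i
      · rw [Set.indicator_of_mem hxi, Set.indicator_of_mem (Set.mem_inter hx hxi)]
      · rw [Set.indicator_of_notMem hxi, Set.indicator_of_notMem (fun h => hxi h.2)]
    · rw [Set.indicator_of_notMem hx]
      symm
      refine Finset.sum_eq_zero fun i _ => ?_
      rw [Set.indicator_of_notMem (fun h => hx h.1), mul_zero]
  have hgbound : ∀ k, morreyNorm n p q ((E k).indicator g) ≤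
      ∑ i, ENNReal.ofReal |c i| * volume (E k ∩ A i) ^ (1/p) := by
    intro k
    rw [hgk k]
    refine (morreyNorm_sum_le hq.le Finset.univ _ (fun i =>
      (measurable_const.indicator ((hE k).inter (hA i).1)).const_mul (c i))).trans ?_
    refine Finset.sum_le_sum fun i _ => ?_
    exact (morreyNorm_smul_le hq0 (c i) _).trans
      (mul_le_mul_right (morreyNorm_indicator_le hq hqp ((hE k).inter (hA i).1)) _)
  set S : ℝ := ∑ i, |c i| with hS
  have hS0 : 0 ≤ S := Finset.sum_nonneg fun i _ => abs_nonneg _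
  set η : ℝ := (r/2) / (S + 1) with hη
  have hη0 : 0 < η := by positivity
  have hηpow : (0:ℝ≥0∞) < ENNReal.ofReal η ^ p :=
    ENNReal.rpow_pos (ENNReal.ofReal_pos.mpr hη0) ENNReal.ofReal_ne_top
  have hev : ∀ᶠ k in atTop, ∀ i : Fin N, volume (E k ∩ A i) < ENNReal.ofReal η ^ p := by
    rw [Filter.eventually_all]
    intro i
    exact (tendsto_volume_inter E hE hae (hA i).1 (hA i).2).eventually_lt_const hηpow
  filter_upwards [hev] with k hk
  have hterm : ∀ i : Fin N, volume (E k ∩ A i) ^ (1/p) ≤ ENNReal.ofReal η := by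
    intro i
    have h2 := ENNReal.rpow_le_rpow (hk i).le (by positivity : (0:ℝ) ≤ 1/p)
    rwa [← ENNReal.rpow_mul, mul_one_div_cancel hp0.ne', ENNReal.rpow_one] at h2
  calc morreyNorm n p q ((E k).indicator f)
      ≤ morreyNorm n p q (fun x => f x - g x) + morreyNorm n p q ((E k).indicator g) :=
        hdecomp k
    _ ≤ ENNReal.ofReal (r/2) + ∑ i, ENNReal.ofReal |c i| * ENNReal.ofReal η :=
        add_le_add hfg ((hgbound k).trans (Finset.sum_le_sum fun i _ =>
          mul_le_mul_right (hterm i) _))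
    _ ≤ ENNReal.ofReal (r/2) + ENNReal.ofReal (r/2) := by
        refine add_le_add le_rfl ?_
        rw [← Finset.sum_mul, ← ENNReal.ofReal_sum_of_nonneg (fun i _ => abs_nonneg _),
          ← hS, ← ENNReal.ofReal_mul hS0]
        refine ENNReal.ofReal_le_ofReal ?_
        rw [hη]
        calc S * ((r/2)/(S+1)) = (r/2) * S / (S+1) := by ring
          _ ≤ r/2 := by
              rw [div_le_iff₀ (by linarith : (0:ℝ) < S+1)]
              nlinarith
    _ = ENNReal.ofReal r := by
        rw [← ENNReal.ofReal_add (by linarith) (by linarith), add_halves]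
    _ ≤ ε := hrε
lemma hat_to_tilde {n : ℕ} {p q : ℝ} (hq : 1 < q) (hqp : q ≤ p)
    {f : (Fin n → ℝ) → ℝ} (hf : MemMorreyHat n p q f) : MemMorreyTilde n p q f := by
  obtain ⟨hmeas, hfin, hAC⟩ := hf
  have hq0 : 0 < q := by linarith
  have hp0 : 0 < p := by linarith
  refine ⟨hmeas, hfin, fun ε hε => ?_⟩
  set E : ℕ → Set (Fin n → ℝ) :=
    fun k => {x | (k:ℝ) < |f x|} ∪ ⋃ i, {x | (k:ℝ) < |x i|} with hEdef
  have hEmeas : ∀ k, MeasurableSet (E k) := fun k =>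
    (measurableSet_lt measurable_const hmeas.abs).union
      (MeasurableSet.iUnion fun i =>
        measurableSet_lt measurable_const (measurable_pi_apply i).abs)
  have hnotE : ∀ (k : ℕ) (x : Fin n → ℝ), max |f x| ‖x‖ ≤ (k:ℝ) → x ∉ E k := by
    intro k x hx hxE
    rcases hxE with h | h
    · exact absurd h (not_lt.mpr (le_trans (le_max_left _ _) hx))
    · obtain ⟨i, hi⟩ := Set.mem_iUnion.mp h
      have hxi : |x i| ≤ ‖x‖ := by
        rw [← Real.norm_eq_abs]; exact norm_le_pi_norm x i
      exact absurd hi (not_lt.mpr (le_trans hxi (le_trans (le_max_right _ _) hx)))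
  have hae : ∀ᵐ x : Fin n → ℝ,
      Tendsto (fun k => (E k).indicator (fun _ => (1:ℝ)) x) atTop (nhds 0) := by
    refine ae_of_all _ fun x => ?_
    obtain ⟨K, hK⟩ := exists_nat_ge (max |f x| ‖x‖)
    refine Tendsto.congr' ?_ tendsto_const_nhds
    filter_upwards [eventually_ge_atTop K] with k hk
    have hxE : x ∉ E k := hnotE k x (hK.trans (by exact_mod_cast hk))
    rw [Set.indicator_of_notMem hxE]
  have htend := hAC E hEmeas hae
  obtain ⟨k₀, hk₀⟩ := (htend.eventually_lt_const
    (ENNReal.ofReal_pos.mpr (by linarith : (0:ℝ) < ε/2))).exists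
  set h : (Fin n → ℝ) → ℝ := (E k₀)ᶜ.indicator f with hhdef
  have hhmeas : Measurable h := hmeas.indicator (hEmeas k₀).compl
  have hhbd : ∀ x, |h x| ≤ (k₀:ℝ) := by
    intro x
    by_cases hx : x ∈ (E k₀)ᶜ
    · rw [hhdef, Set.indicator_of_mem hx]
      have hnot : ¬ ((k₀:ℝ) < |f x|) := fun hlt => Set.notMem_of_mem_compl hx (Set.mem_union_left _ hlt)
      exact not_lt.mp hnot
    · rw [hhdef, Set.indicator_of_notMem hx, abs_zero]
      exact Nat.cast_nonneg _
  set Box : Set (Fin n → ℝ) := Set.univ.pi fun _ => Set.Icc (-(k₀:ℝ)) (k₀:ℝ) with hBox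
  have hBoxmeas : MeasurableSet Box := MeasurableSet.univ_pi fun _ => measurableSet_Icc
  have hBoxvol : volume Box < ⊤ := by
    rw [hBox, volume_pi, Measure.pi_pi]
    refine ENNReal.prod_lt_top fun i _ => ?_
    rw [Real.volume_Icc]
    exact ENNReal.ofReal_lt_top
  have hout : ∀ x, x ∉ Box → x ∈ E k₀ := by
    intro x hx
    rw [hBox] at hx
    simp only [Set.mem_pi, Set.mem_univ, forall_true_left, not_forall] at hx
    obtain ⟨i, hi⟩ := hx
    rw [Set.mem_Icc, not_and_or, not_le, not_le] at hi
    refine Set.mem_union_right _ (Set.mem_iUnion.mpr ⟨i, ?_⟩)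
    show (k₀:ℝ) < |x i|
    rcases hi with h1 | h1
    · exact lt_abs.mpr (Or.inr (by linarith))
    · exact lt_abs.mpr (Or.inl h1)
  set W : ℝ≥0∞ := volume Box ^ (1/p) with hW
  have hWt : W ≠ ⊤ := (ENNReal.rpow_lt_top_of_nonneg (by positivity) hBoxvol.ne).ne
  have hWnn : 0 ≤ W.toReal := ENNReal.toReal_nonneg
  set δ : ℝ := (ε/2) / (W.toReal + 1) with hδ
  have hδ0 : 0 < δ := by positivity
  set M : ℕ := ⌈(k₀:ℝ)/δ⌉₊ with hM
  have hMδ : (k₀:ℝ) ≤ M * δ := by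
    rw [← div_le_iff₀ hδ0]
    exact Nat.le_ceil _
  set N : ℕ := 2*M+1 with hN
  set c : Fin N → ℝ := fun i => (((i:ℕ):ℝ) - (M:ℝ)) * δ with hc
  set A : Fin N → Set (Fin n → ℝ) :=
    fun i => Box ∩ {x | ⌊h x / δ⌋ = ((i:ℕ):ℤ) - (M:ℤ)} with hA
  have hfloor_meas : Measurable fun x => ⌊h x / δ⌋ := (hhmeas.div_const δ).floor
  have hAmeas : ∀ i, MeasurableSet (A i) := fun i =>
    hBoxmeas.inter (hfloor_meas (measurableSet_singleton _))
  have hAvol : ∀ i, volume (A i) < ⊤ := fun i =>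
    lt_of_le_of_lt (measure_mono Set.inter_subset_left) hBoxvol
  set g : (Fin n → ℝ) → ℝ :=
    fun x => ∑ i, c i * (A i).indicator (fun _ => (1:ℝ)) x with hgdef
  have hgsimple : IsFinSimple n g := ⟨N, c, A, fun i => ⟨hAmeas i, hAvol i⟩, rfl⟩
  have hgmeas : Measurable g := Finset.measurable_sum _ fun i _ =>
    (measurable_const.indicator (hAmeas i)).const_mul (c i)
  have hzero_out : ∀ x, x ∉ Box → h x = 0 ∧ g x = 0 := by
    intro x hx
    constructor
    · rw [hhdef, Set.indicator_of_notMem (fun hcc => Set.notMem_of_mem_compl hcc (hout x hx))]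
    · show (∑ i, c i * (A i).indicator (fun _ => (1:ℝ)) x) = 0
      exact Finset.sum_eq_zero fun i _ => by
        rw [Set.indicator_of_notMem (fun hcc => hx hcc.1), mul_zero]
  have happrox : ∀ x, |h x - g x| ≤ δ := by
    intro x
    by_cases hx : x ∈ Box
    · set j : ℤ := ⌊h x / δ⌋ with hj
      have hb := abs_le.mp (hhbd x)
      have hjle : (j:ℝ) ≤ h x / δ := Int.floor_le _
      have hjgt : h x / δ < j + 1 := Int.lt_floor_add_one _
      have h1 : h x / δ ≤ (M:ℝ) := by
        rw [div_le_iff₀ hδ0]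
        calc h x ≤ (k₀:ℝ) := hb.2
          _ ≤ M * δ := hMδ
          _ = (M:ℝ) * δ := rfl
      have h2 : -(M:ℝ) ≤ h x / δ := by
        rw [le_div_iff₀ hδ0]
        have : -((M:ℝ) * δ) ≤ h x := by
          have := hb.1
          linarith
        linarith
      have hjub : j ≤ (M:ℤ) := by exact_mod_cast hjle.trans h1
      have hjlb : -(M:ℤ) ≤ j := by
        refine Int.le_floor.mpr ?_
        push_cast
        exact h2
      have hi0lt : (j + (M:ℤ)).toNat < N := by omega
      set i₀ : Fin N := ⟨(j + (M:ℤ)).toNat, hi0lt⟩ with hi₀def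
      have hi₀ : ((i₀:ℕ):ℤ) = j + (M:ℤ) := by
        simp only [hi₀def]
        exact Int.toNat_of_nonneg (by omega)
      have hgx : g x = (j:ℝ) * δ := by
        show (∑ i, c i * (A i).indicator (fun _ => (1:ℝ)) x) = (j:ℝ) * δ
        rw [Finset.sum_eq_single i₀ ?_ ?_]
        · have hmem : x ∈ A i₀ := by
            refine Set.mem_inter hx ?_
            show ⌊h x / δ⌋ = ((i₀:ℕ):ℤ) - (M:ℤ)
            rw [hi₀, ← hj]
            ring
          rw [Set.indicator_of_mem hmem, mul_one]
          show (((i₀:ℕ):ℝ) - (M:ℝ)) * δ = (j:ℝ) * δ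
          have hcast : ((i₀:ℕ):ℝ) = (j:ℝ) + (M:ℝ) := by exact_mod_cast hi₀
          rw [hcast]
          ring
        · intro i _ hne
          have hnotmem : x ∉ A i := by
            intro hmemi
            apply hne
            have hfl : ⌊h x / δ⌋ = ((i:ℕ):ℤ) - (M:ℤ) := hmemi.2
            have : ((i:ℕ):ℤ) = ((i₀:ℕ):ℤ) := by
              rw [hi₀, ← hj] at *
              omega
            exact Fin.ext (by exact_mod_cast this)
          rw [Set.indicator_of_notMem hnotmem, mul_zero]
        · intro habs
          exact absurd (Finset.mem_univ i₀) habs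
      have hjδ : (j:ℝ) * δ ≤ h x := by
        rw [← le_div_iff₀ hδ0]
        exact hjle
      have hjδ2 : h x < ((j:ℝ) + 1) * δ := by
        rw [← div_lt_iff₀ hδ0]
        exact_mod_cast hjgt
      rw [hgx, abs_le]
      constructor <;> nlinarith
    · obtain ⟨h1, h2⟩ := hzero_out x hx
      rw [h1, h2, sub_zero, abs_zero]
      exact hδ0.le
  refine ⟨g, hgsimple, ?_⟩
  have hsplit : (fun x => f x - g x)
      = fun x => (E k₀).indicator f x + (h x - g x) := by
    funext x
    by_cases hx : x ∈ E k₀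
    · rw [Set.indicator_of_mem hx, hhdef,
        Set.indicator_of_notMem (fun hcc => Set.notMem_of_mem_compl hcc hx)]
      ring
    · rw [Set.indicator_of_notMem hx, hhdef, Set.indicator_of_mem (Set.mem_compl hx)]
      ring
  rw [hsplit]
  refine (morreyNorm_add_le hq.le (hmeas.indicator (hEmeas k₀))
    (hhmeas.sub hgmeas)).trans ?_
  have hdiff : ∀ x, |h x - g x| ≤ |δ * Box.indicator (fun _ => (1:ℝ)) x| := by
    intro x
    by_cases hx : x ∈ Box
    · rw [Set.indicator_of_mem hx, mul_one, abs_of_pos hδ0]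
      exact happrox x
    · obtain ⟨h1, h2⟩ := hzero_out x hx
      rw [h1, h2, sub_zero, abs_zero]
      exact abs_nonneg _
  have hbd2 : morreyNorm n p q (fun x => h x - g x) ≤ ENNReal.ofReal (ε/2) := by
    refine (morreyNorm_mono hq0 hdiff).trans ?_
    refine (morreyNorm_smul_le hq0 δ _).trans ?_
    rw [abs_of_pos hδ0]
    refine (mul_le_mul_right (morreyNorm_indicator_le hq hqp hBoxmeas) _).trans ?_
    have hWe : volume Box ^ (1/p) = ENNReal.ofReal W.toReal := by
      rw [← hW, ENNReal.ofReal_toReal hWt]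
    rw [hWe, ← ENNReal.ofReal_mul hδ0.le]
    refine ENNReal.ofReal_le_ofReal ?_
    rw [hδ]
    rw [div_mul_eq_mul_div, div_le_iff₀ (by linarith : (0:ℝ) < W.toReal+1)]
    nlinarith
  refine (add_le_add hk₀.le hbd2).trans ?_
  rw [← ENNReal.ofReal_add (by linarith) (by linarith), add_halves]

/-- M̃^p_q(ℝⁿ) = M̂^p_q(ℝⁿ). -/
theorem stmt15 (n : ℕ) (p q : ℝ) (hq : 1 < q) (hqp : q ≤ p)
    (f : (Fin n → ℝ) → ℝ) :
    MemMorreyTilde n p q f ↔ MemMorreyHat n p q f :=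
  ⟨fun h => tilde_to_hat hq hqp h, fun h => hat_to_tilde hq hqp h⟩
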